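/- Let D, A be bounded operators on a complex Hilbert space with real parts D₁, T satisfying ⟨D₁x,x⟩ ≥ δ⟨Tx,x⟩ and ⟨Tx,x⟩ ≥ a₀‖x‖² for all x, with δ, a₀ > 0, and imaginary parts D₂, S̃. Let k > 0 and p, q > 0 with p + q ≤ 1, and suppose ω₁' = a₀(δ/k − ‖S̃‖²/(4pk²a₀²) − ‖D₂‖²/(4q·a₀²)·a₀) satisfies the bound (1/k)⟨D₁x,x⟩ − (1/(4pk²))‖S̃x‖²/a₀ − (1/(4q))‖D₂x‖²/a₀ ≥ ω₁'‖x‖² for all x. Then for the companion operator 𝒜 and the form [·,·] as above, −(1/k)Re[𝒜x,x] ≥ (ω₁'−1)‖x₁‖² + (1−p−q)⟨Tx₂,x₂⟩ for all x = (x₁,x₂). -/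

import Mathlib

open scoped InnerProductSpace

theorem reB {H : Type*} [NormedAddCommGroup H] [InnerProductSpace ℂ H] [CompleteSpace H]
    (T S D₁ D₂ : H →L[ℂ] H)
    (hT : IsSelfAdjoint T) (hS : IsSelfAdjoint S)
    (hD₁sa : IsSelfAdjoint D₁) (hD₂sa : IsSelfAdjoint D₂)
    (k : ℝ) (x₁ x₂ : H) :
    ((⟪x₂, T x₁⟫_ℂ + (k : ℂ) * ⟪x₂, D₁ x₁⟫_ℂ - (k : ℂ) ^ 2 * ⟪x₂, x₁⟫_ℂ +
      ⟪x₁ + k • x₂, (-(D₁ + Complex.I • D₂) x₁ - (T + Complex.I • S) x₂) + k • x₁⟫_ℂ).re)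
    = k * ‖x₁‖ ^ 2 - (⟪x₁, D₁ x₁⟫_ℂ).re - k * (⟪x₂, T x₂⟫_ℂ).re
      + (⟪x₁, S x₂⟫_ℂ).im + k * (⟪x₂, D₂ x₁⟫_ℂ).im := by
  have h1 : ⟪x₂, T x₁⟫_ℂ = starRingEnd ℂ ⟪x₁, T x₂⟫_ℂ := by
    rw [← hT.isSymmetric.apply_clm x₂ x₁, inner_conj_symm]
  have h2 : (⟪x₁, D₁ x₁⟫_ℂ).im = 0 := by
    have h : starRingEnd ℂ ⟪x₁, D₁ x₁⟫_ℂ = ⟪x₁, D₁ x₁⟫_ℂ := by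
      rw [inner_conj_symm, hD₁sa.isSymmetric.apply_clm]
    exact Complex.conj_eq_iff_im.mp h
  have h2D : (⟪x₁, D₂ x₁⟫_ℂ).im = 0 := by
    have h : starRingEnd ℂ ⟪x₁, D₂ x₁⟫_ℂ = ⟪x₁, D₂ x₁⟫_ℂ := by
      rw [inner_conj_symm, hD₂sa.isSymmetric.apply_clm]
    exact Complex.conj_eq_iff_im.mp h
  have h2T : (⟪x₂, T x₂⟫_ℂ).im = 0 := by
    have h : starRingEnd ℂ ⟪x₂, T x₂⟫_ℂ = ⟪x₂, T x₂⟫_ℂ := by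
      rw [inner_conj_symm, hT.isSymmetric.apply_clm]
    exact Complex.conj_eq_iff_im.mp h
  have h2S : (⟪x₂, S x₂⟫_ℂ).im = 0 := by
    have h : starRingEnd ℂ ⟪x₂, S x₂⟫_ℂ = ⟪x₂, S x₂⟫_ℂ := by
      rw [inner_conj_symm, hS.isSymmetric.apply_clm]
    exact Complex.conj_eq_iff_im.mp h
  have hn : (⟪x₁, x₁⟫_ℂ).re = ‖x₁‖^2 := by
    simpa using inner_self_eq_norm_sq (𝕜 := ℂ) x₁
  simp only [← Complex.coe_smul]
  simp only [ContinuousLinearMap.add_apply, ContinuousLinearMap.smul_apply,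
    inner_add_left, inner_add_right, inner_sub_right, inner_neg_right,
    inner_smul_left, inner_smul_right, inner_smul_real_left, inner_smul_real_right,
    smul_eq_mul, Complex.real_smul]
  rw [h1]
  simp only [Complex.add_re, Complex.sub_re, Complex.neg_re, Complex.mul_re,
    Complex.mul_im, Complex.add_im, Complex.sub_im, Complex.neg_im,
    Complex.conj_re, Complex.conj_im, Complex.I_re, Complex.I_im,
    Complex.ofReal_re, Complex.ofReal_im, ← Complex.ofReal_pow]
  rw [h2S, h2D, hn]
  ring

/-- under the strong damping assumption `⟨D₁x,x⟩ ≥ δ⟨Tx,x⟩`, if `ω₁'`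
satisfies `(1/k)⟨D₁x,x⟩ - (1/(4pk²))‖S̃x‖²/a₀ - (1/(4q))‖D₂x‖²/a₀ ≥ ω₁'‖x‖²`, then
`-(1/k)Re[𝒜x,x] ≥ (ω₁'-1)‖x₁‖² + (1-p-q)⟨Tx₂,x₂⟩`.
(Inner products in the mathematical convention `⟨u,v⟩ = ⟪v, u⟫_ℂ`.) -/
theorem companion_form_lower_estimate_strong_damping {H : Type*} [NormedAddCommGroup H]
    [InnerProductSpace ℂ H] [CompleteSpace H]
    (T S D₁ D₂ A D : H →L[ℂ] H)
    (hT : IsSelfAdjoint T) (hS : IsSelfAdjoint S)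
    (hD₁sa : IsSelfAdjoint D₁) (hD₂sa : IsSelfAdjoint D₂)
    (hA : A = T + Complex.I • S) (hD : D = D₁ + Complex.I • D₂)
    (a₀ δ : ℝ) (ha₀ : 0 < a₀) (hδ : 0 < δ)
    (hTcoerc : ∀ x : H, a₀ * ‖x‖ ^ 2 ≤ (⟪x, T x⟫_ℂ).re)
    (hdamp : ∀ x : H, δ * (⟪x, T x⟫_ℂ).re ≤ (⟪x, D₁ x⟫_ℂ).re)
    (k : ℝ) (hk : 0 < k)
    (p q : ℝ) (hp : 0 < p) (hq : 0 < q) (hpq : p + q ≤ 1)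
    (ω₁' : ℝ)
    (hω₁' : ∀ x : H,
      ω₁' * ‖x‖ ^ 2 ≤
        (1 / k) * (⟪x, D₁ x⟫_ℂ).re - (1 / (4 * p * k ^ 2)) * ‖S x‖ ^ 2 / a₀ -
          (1 / (4 * q)) * ‖D₂ x‖ ^ 2 / a₀) :
    ∀ x₁ x₂ : H,
      (ω₁' - 1) * ‖x₁‖ ^ 2 + (1 - p - q) * (⟪x₂, T x₂⟫_ℂ).re ≤
        -(1 / k) *
          ((⟪x₂, T x₁⟫_ℂ + (k : ℂ) * ⟪x₂, D₁ x₁⟫_ℂ - (k : ℂ) ^ 2 * ⟪x₂, x₁⟫_ℂ +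
            ⟪x₁ + k • x₂, (-D x₁ - A x₂) + k • x₁⟫_ℂ).re) := by
  intro x₁ x₂
  subst hA hD
  rw [reB T S D₁ D₂ hT hS hD₁sa hD₂sa k x₁ x₂]
  set t2 := (⟪x₂, T x₂⟫_ℂ).re with ht2
  set d1 := (⟪x₁, D₁ x₁⟫_ℂ).re with hd1
  have hcoerc2 : a₀ * ‖x₂‖ ^ 2 ≤ t2 := hTcoerc x₂
  have hS1 : (⟪x₁, S x₂⟫_ℂ).im ≤ ‖S x₁‖ * ‖x₂‖ := by
    rw [← hS.isSymmetric.apply_clm x₁ x₂]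
    calc (⟪S x₁, x₂⟫_ℂ).im ≤ |(⟪S x₁, x₂⟫_ℂ).im| := le_abs_self _
    _ ≤ ‖⟪S x₁, x₂⟫_ℂ‖ := Complex.abs_im_le_norm _
    _ ≤ ‖S x₁‖ * ‖x₂‖ := by
        exact norm_inner_le_norm _ _
  have hD2 : (⟪x₂, D₂ x₁⟫_ℂ).im ≤ ‖x₂‖ * ‖D₂ x₁‖ := by
    calc (⟪x₂, D₂ x₁⟫_ℂ).im ≤ |(⟪x₂, D₂ x₁⟫_ℂ).im| := le_abs_self _
    _ ≤ ‖⟪x₂, D₂ x₁⟫_ℂ‖ := Complex.abs_im_le_norm _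
    _ ≤ ‖x₂‖ * ‖D₂ x₁‖ := by
        exact norm_inner_le_norm _ _
  have hAM1 : (1 / k) * (‖S x₁‖ * ‖x₂‖) ≤
      (1 / (4 * p * k ^ 2)) * ‖S x₁‖ ^ 2 / a₀ + p * (a₀ * ‖x₂‖ ^ 2) := by
    have h := sq_nonneg (‖S x₁‖ - 2 * p * a₀ * k * ‖x₂‖)
    have key : (1 / (4 * p * k ^ 2)) * ‖S x₁‖ ^ 2 / a₀ + p * (a₀ * ‖x₂‖ ^ 2)
        - (1 / k) * (‖S x₁‖ * ‖x₂‖)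
        = (‖S x₁‖ - 2 * p * a₀ * k * ‖x₂‖) ^ 2 / (4 * p * a₀ * k ^ 2) := by
      field_simp
      ring
    rw [← sub_nonneg, key]
    positivity
  have hAM2 : ‖x₂‖ * ‖D₂ x₁‖ ≤
      (1 / (4 * q)) * ‖D₂ x₁‖ ^ 2 / a₀ + q * (a₀ * ‖x₂‖ ^ 2) := by
    have h := sq_nonneg (‖D₂ x₁‖ - 2 * q * a₀ * ‖x₂‖)
    have key : (1 / (4 * q)) * ‖D₂ x₁‖ ^ 2 / a₀ + q * (a₀ * ‖x₂‖ ^ 2)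
        - ‖x₂‖ * ‖D₂ x₁‖
        = (‖D₂ x₁‖ - 2 * q * a₀ * ‖x₂‖) ^ 2 / (4 * q * a₀) := by
      field_simp
      ring
    rw [← sub_nonneg, key]
    positivity
  have hω := hω₁' x₁
  have hkpos : 0 < 1 / k := by positivity
  have h5 : (1 / k) * (⟪x₁, S x₂⟫_ℂ).im ≤
      (1 / (4 * p * k ^ 2)) * ‖S x₁‖ ^ 2 / a₀ + p * t2 := by
    have := mul_le_mul_of_nonneg_left hS1 (le_of_lt hkpos)
    have hpt : p * (a₀ * ‖x₂‖ ^ 2) ≤ p * t2 := mul_le_mul_of_nonneg_left hcoerc2 (le_of_lt hp)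
    linarith
  have h6 : (⟪x₂, D₂ x₁⟫_ℂ).im ≤ (1 / (4 * q)) * ‖D₂ x₁‖ ^ 2 / a₀ + q * t2 := by
    have hqt : q * (a₀ * ‖x₂‖ ^ 2) ≤ q * t2 := mul_le_mul_of_nonneg_left hcoerc2 (le_of_lt hq)
    linarith
  have hexp : -(1 / k) * (k * ‖x₁‖ ^ 2 - d1 - k * t2 + (⟪x₁, S x₂⟫_ℂ).im
      + k * (⟪x₂, D₂ x₁⟫_ℂ).im)
      = -‖x₁‖ ^ 2 + (1 / k) * d1 + t2 - (1 / k) * (⟪x₁, S x₂⟫_ℂ).im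
        - (⟪x₂, D₂ x₁⟫_ℂ).im := by
    field_simp
    ring
  rw [hexp]
  linarith
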